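/- Let (X, T) be a minimal dynamical system where T is an Abelian group acting by homeomorphisms on a non-compact locally compact Hausdorff space X, and let X̂ = X ∪ {∞} be the one-point compactification with the extended T-action fixing ∞. Then the constant map sending every point of X̂ to ∞ belongs to the Ellis semigroup E(X̂, T), i.e., it is a pointwise limit of translation maps x ↦ x·t. -/

import Mathlib

open Metric Set OnePoint

/-- The extension of the translation `x ↦ t • x` to the one-point
compactification, fixing the point at infinity. -/
def extAct {T X : Type*} [CommGroup T] [MulAction T X] (t : T) :
    OnePoint X → OnePoint X :=
  OnePoint.map (fun x => t • x)

/-- for a minimal action of an Abelian group `T` by homeomorphisms on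
a non-compact locally compact Hausdorff space `X`, the constant map to `∞` on the
one-point compactification is a pointwise limit of the (extended) translation maps,
i.e. belongs to the Ellis semigroup `E(X̂, T)`. -/
theorem stmt6 {T X : Type*} [CommGroup T] [TopologicalSpace X] [T2Space X]
    [LocallyCompactSpace X] (hnc : ¬ CompactSpace X)
    [MulAction T X] [ContinuousConstSMul T X]
    (hmin : ∀ x : X, Dense (MulAction.orbit T x)) :
    (fun _ : OnePoint X => (∞ : OnePoint X)) ∈
      closure {f : OnePoint X → OnePoint X | ∃ t : T, f = extAct t} := by
  classical
  have hnc' : NoncompactSpace X := not_compactSpace_iff.mp hnc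
  set S : Set (OnePoint X → OnePoint X) := {f | ∃ t : T, f = extAct t} with hS
  -- continuity of each extended translation
  have hcont : ∀ t : T, Continuous (extAct (X := X) t) := by
    intro t
    have h : extAct (X := X) t = ⇑((Homeomorph.smul t (α := X)).onePointCongr) := rfl
    rw [h]
    exact (Homeomorph.onePointCongr _).continuous
  -- every element of the closure fixes ∞
  have hfix : ∀ p ∈ closure S, p ∞ = ∞ := by
    intro p hp
    have hsub : closure S ⊆ {f : OnePoint X → OnePoint X | f ∞ = ∞} := by
      refine closure_minimal ?_ (isClosed_eq (continuous_apply ∞) continuous_const)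
      rintro f ⟨t, rfl⟩
      rfl
    exact hsub hp
  -- composing with a translation on the left stays in the closure
  have hcomp1 : ∀ (t : T), ∀ p ∈ closure S, extAct t ∘ p ∈ closure S := by
    intro t p hp
    have hc : Continuous fun q : OnePoint X → OnePoint X => extAct t ∘ q :=
      continuous_pi fun x => (hcont t).comp (continuous_apply x)
    have himg : (fun q : OnePoint X → OnePoint X => extAct t ∘ q) '' S ⊆ S := by
      rintro _ ⟨g, ⟨s, rfl⟩, rfl⟩
      refine ⟨t * s, ?_⟩
      funext x
      cases x with
      | infty => rfl
      | coe x =>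
        show extAct t (extAct s (OnePoint.some x)) = extAct (t * s) (OnePoint.some x)
        simp [extAct, OnePoint.map, OnePoint.some, mul_smul]
        rfl
    exact closure_mono himg
      (image_closure_subset_closure_image hc (mem_image_of_mem _ hp))
  -- the closure is stable under composition
  have hcomp2 : ∀ p ∈ closure S, ∀ q ∈ closure S, q ∘ p ∈ closure S := by
    intro p hp q hq
    have hc : Continuous fun r : OnePoint X → OnePoint X => r ∘ p :=
      continuous_pi fun x => continuous_apply (p x)
    have himg : (fun r : OnePoint X → OnePoint X => r ∘ p) '' S ⊆ closure S := by
      rintro _ ⟨g, ⟨s, rfl⟩, rfl⟩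
      exact hcomp1 s p hp
    have h1 : q ∘ p ∈ closure ((fun r : OnePoint X → OnePoint X => r ∘ p) '' S) :=
      image_closure_subset_closure_image hc (mem_image_of_mem _ hq)
    have := closure_mono himg h1
    rwa [closure_closure] at this
  -- for each point of the compactification, some element of the closure sends it to ∞
  have hkill : ∀ y : OnePoint X, ∃ p ∈ closure S, p y = ∞ := by
    intro y
    cases y with
    | infty => exact ⟨extAct (1 : T), subset_closure ⟨1, rfl⟩, rfl⟩
    | coe x =>
      -- the set of values at x of elements of the closure is compact, hence closed
      have hScpt : IsCompact (closure S) := isClosed_closure.isCompact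
      have hAc : IsCompact ((fun p : OnePoint X → OnePoint X => p (OnePoint.some x)) '' closure S) :=
        hScpt.image (continuous_apply _)
      have hAclosed : IsClosed ((fun p : OnePoint X → OnePoint X => p (OnePoint.some x)) '' closure S) :=
        hAc.isClosed
      -- ∞ is in the closure of the image of the orbit of x
      have horb : Dense ((fun z : X => (z : OnePoint X)) '' MulAction.orbit T x) :=
        denseRange_coe.dense_image continuous_coe (hmin x)
      have hmem : (∞ : OnePoint X) ∈
          (fun p : OnePoint X → OnePoint X => p (OnePoint.some x)) '' closure S := by
        refine hAclosed.closure_subset ?_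
        refine closure_mono ?_ (horb ∞)
        rintro _ ⟨_, ⟨t, rfl⟩, rfl⟩
        exact ⟨extAct t, subset_closure ⟨t, rfl⟩, rfl⟩
      obtain ⟨p, hp, hpx⟩ := hmem
      exact ⟨p, hp, hpx⟩
  -- main finite claim
  have key : ∀ F : Finset (OnePoint X), ∃ p ∈ closure S, ∀ y ∈ F, p y = ∞ := by
    intro F
    induction F using Finset.induction with
    | empty => exact ⟨extAct (1 : T), subset_closure ⟨1, rfl⟩, by simp⟩
    | @insert y F hy ih =>
      obtain ⟨p, hp, hpF⟩ := ih
      obtain ⟨q, hq, hqy⟩ := hkill (p y)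
      refine ⟨q ∘ p, hcomp2 p hp q hq, ?_⟩
      intro z hz
      rcases Finset.mem_insert.mp hz with rfl | hz
      · exact hqy
      · show q (p z) = ∞
        rw [hpF z hz, hfix q hq]
  -- conclude using the product topology
  rw [_root_.mem_closure_iff]
  intro U hU hxU
  obtain ⟨I, u, h1, h2⟩ := isOpen_pi_iff.mp hU _ hxU
  obtain ⟨p, hp, hpI⟩ := key I
  have hpU : p ∈ U := by
    refine h2 ?_
    intro a ha
    rw [hpI a ha]
    exact (h1 a ha).2
  obtain ⟨f, hfU, hfS⟩ := _root_.mem_closure_iff.mp hp U hU hpU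
  exact ⟨f, hfU, hfS⟩
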